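/- Let d ≥ 1 be a natural number, let a : Fin d → ℕ, and let m ∈ ℕ. Then the sum, over all tuples f : Fin d → ℕ with ∑_j f j = m, of (1 + ∑_j (f j)·(a j)) equals C(m+d-1, d-1) + (∑_j a j)·C(m+d-1, d). -/

import Mathlib

open Finset

lemma sum_AT_succ {M : Type*} [AddCommMonoid M] (d m : ℕ) (F : (Fin (d+1) → ℕ) → M) :
    ∑ f ∈ Finset.Nat.antidiagonalTuple (d+1) m, F f =
      ∑ p ∈ Finset.HasAntidiagonal.antidiagonal m,
        ∑ g ∈ Finset.Nat.antidiagonalTuple d p.2, F (Fin.cons p.1 g) := by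
  rw [Finset.sum_sigma']
  refine Finset.sum_bij' (fun f _ => (⟨(f 0, ∑ k, f (Fin.succ k)), Fin.tail f⟩ :
      (_ : ℕ × ℕ) × (Fin d → ℕ)))
    (fun x _ => Fin.cons x.1.1 x.2) ?_ ?_ ?_ ?_ ?_
  · intro f hf
    simp only [Finset.Nat.mem_antidiagonalTuple] at hf
    simp only [Finset.mem_sigma, Finset.HasAntidiagonal.mem_antidiagonal,
      Finset.Nat.mem_antidiagonalTuple, Fin.tail]
    refine ⟨?_, by simp [Fin.tail]⟩
    rw [← hf, Fin.sum_univ_succ]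
  · rintro ⟨⟨i, j⟩, g⟩ h
    simp only [Finset.mem_sigma, Finset.HasAntidiagonal.mem_antidiagonal,
      Finset.Nat.mem_antidiagonalTuple] at h ⊢
    rw [Fin.sum_cons, h.2, h.1]
  · intro f hf
    simp [Fin.cons_self_tail]
  · rintro ⟨⟨i, j⟩, g⟩ h
    simp only [Finset.mem_sigma, Finset.HasAntidiagonal.mem_antidiagonal,
      Finset.Nat.mem_antidiagonalTuple] at h
    simp [Fin.tail, h.2]
  · intro f hf
    rw [Fin.cons_self_tail]

lemma aux_hockey (k : ℕ) : ∀ m, ∑ j ∈ range (m+1), (m - j) * (j+k).choose k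
    = (m + k + 1).choose (k + 2) := by
  intro m
  induction m with
  | zero => simp [Nat.choose_eq_zero_of_lt]
  | succ m ih =>
    rw [Finset.sum_range_succ]
    simp only [Nat.sub_self, zero_mul, add_zero]
    have : ∀ j ∈ range (m+1), (m + 1 - j) * (j+k).choose k
        = (m - j) * (j+k).choose k + (j+k).choose k := by
      intro j hj
      simp only [Finset.mem_range] at hj
      have : m + 1 - j = (m - j) + 1 := by omega
      rw [this, add_mul, one_mul]
    rw [Finset.sum_congr rfl this, Finset.sum_add_distrib, ih,
      Nat.sum_range_add_choose m k]
    have h1 : m + 1 + k + 1 = (m + k + 1) + 1 := by ring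
    rw [h1, Nat.choose_succ_succ (m+k+1) (k+1)]
    simp only [Nat.succ_eq_add_one]
    rw [show k + 1 + 1 = k + 2 by omega, show m + 1 + k = m + k + 1 by omega] at *
    omega

lemma hockey2 (k : ℕ) (m : ℕ) : ∑ j ∈ range (m+1), (j + k).choose (k+1)
    = (m + k + 1).choose (k + 2) := by
  induction m with
  | zero => simp [Nat.choose_eq_zero_of_lt]
  | succ m ih =>
    rw [Finset.sum_range_succ, ih]
    have h1 : m + 1 + k + 1 = (m + k + 1) + 1 := by ring
    rw [h1, Nat.choose_succ_succ (m+k+1) (k+1)]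
    simp only [Nat.succ_eq_add_one]
    rw [show k + 1 + 1 = k + 2 by omega, show m + 1 + k = m + k + 1 by omega] at *
    omega

lemma aux_main (d : ℕ) (a : Fin (d+1) → ℕ) (m : ℕ) :
    ∑ f ∈ Finset.Nat.antidiagonalTuple (d+1) m, (1 + ∑ j, f j * a j)
      = (m + d).choose d + (∑ j, a j) * (m + d).choose (d+1) := by
  induction d generalizing m with
  | zero =>
    rw [Finset.Nat.antidiagonalTuple_one, Finset.sum_singleton]
    simp [Fin.sum_univ_one, mul_comm]
  | succ d ih =>
    rw [sum_AT_succ]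
    have key : ∀ p ∈ Finset.HasAntidiagonal.antidiagonal m,
        ∑ g ∈ Finset.Nat.antidiagonalTuple (d+1) p.2,
          (1 + ∑ j, (Fin.cons p.1 g : Fin (d+1+1) → ℕ) j * a j)
        = (p.2 + d).choose d + ((∑ k, a (Fin.succ k)) * (p.2 + d).choose (d+1)
            + p.1 * a 0 * (p.2 + d).choose d) := by
      intro p _
      have e1 : ∀ g : Fin (d+1) → ℕ,
          (1 + ∑ j, (Fin.cons p.1 g : Fin (d+1+1) → ℕ) j * a j)
          = (1 + ∑ k, g k * a (Fin.succ k)) + p.1 * a 0 := by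
        intro g
        rw [Fin.sum_univ_succ]
        simp [add_comm, add_assoc, add_left_comm]
      rw [Finset.sum_congr rfl (fun g _ => e1 g), Finset.sum_add_distrib,
        ih (fun k => a (Fin.succ k)) p.2, Finset.sum_const, smul_eq_mul]
      have card_eq : (Finset.Nat.antidiagonalTuple (d+1) p.2).card
          = (p.2 + d).choose d := by
        have := ih (fun _ => 0) p.2
        simpa using this
      rw [card_eq]
      ring
    rw [Finset.sum_congr rfl key, Finset.sum_add_distrib, Finset.sum_add_distrib]
    rw [Finset.Nat.sum_antidiagonal_eq_sum_range_succ_mk,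
      Finset.Nat.sum_antidiagonal_eq_sum_range_succ_mk,
      Finset.Nat.sum_antidiagonal_eq_sum_range_succ_mk]
    simp only []
    have s1 : ∑ i ∈ range (m+1), ((m - i) + d).choose d = (m + d + 1).choose (d+1) := by
      rw [← Finset.sum_range_reflect]
      have : ∀ j ∈ range (m+1), (m - (m + 1 - 1 - j) + d).choose d = (j + d).choose d := by
        intro j hj; simp only [Finset.mem_range] at hj
        congr 2; omega
      rw [Finset.sum_congr rfl this, Nat.sum_range_add_choose m d]
    have s2 : ∑ i ∈ range (m+1), (∑ k, a (Fin.succ k)) * ((m - i) + d).choose (d+1)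
        = (∑ k, a (Fin.succ k)) * (m + d + 1).choose (d+2) := by
      rw [← Finset.mul_sum]
      congr 1
      rw [← Finset.sum_range_reflect]
      have : ∀ j ∈ range (m+1), (m - (m + 1 - 1 - j) + d).choose (d+1)
          = (j + d).choose (d+1) := by
        intro j hj; simp only [Finset.mem_range] at hj
        congr 2; omega
      rw [Finset.sum_congr rfl this, hockey2 d m]
    have s3 : ∑ i ∈ range (m+1), i * a 0 * ((m - i) + d).choose d
        = a 0 * (m + d + 1).choose (d+2) := by
      have : ∀ i ∈ range (m+1), i * a 0 * ((m - i) + d).choose d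
          = a 0 * (i * ((m - i) + d).choose d) := fun i _ => by ring
      rw [Finset.sum_congr rfl this, ← Finset.mul_sum]
      congr 1
      rw [← Finset.sum_range_reflect]
      have : ∀ j ∈ range (m+1), (m + 1 - 1 - j) * ((m - (m + 1 - 1 - j)) + d).choose d
          = (m - j) * (j + d).choose d := by
        intro j hj; simp only [Finset.mem_range] at hj
        have h1 : m + 1 - 1 - j = m - j := by omega
        have h2 : m - (m - j) = j := by omega
        rw [h1, h2]
      rw [Finset.sum_congr rfl this, aux_hockey d m]
    rw [s1, s2, s3]
    simp only [Fin.sum_univ_succ]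
    ring


theorem stmt_5 (d : ℕ) (hd : 1 ≤ d) (a : Fin d → ℕ) (m : ℕ) :
    ∑ f ∈ Finset.Nat.antidiagonalTuple d m, (1 + ∑ j, f j * a j)
      = (m + d - 1).choose (d - 1) + (∑ j, a j) * (m + d - 1).choose d := by
  obtain ⟨d, rfl⟩ : ∃ d', d = d' + 1 := ⟨d - 1, by omega⟩
  rw [show m + (d + 1) - 1 = m + d by omega, Nat.add_sub_cancel]
  exact aux_main d a m
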